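/- Let a_1, …, a_N : I → ℝ be twice differentiable functions on an interval I whose values are pairwise distinct at every t ∈ I and which satisfy the system a_k'' = a_k a_k' + 2 Σ_{m ≠ k} a_k' a_m'/(a_k − a_m) for all k = 1, …, N. Put u_0(t) = −Σ_{k=1}^N a_k'(t). Then for every real z, the function ψ(t) = e^{−zt/2} ∏_{k=1}^N (z − a_k(t)) satisfies the Schrödinger equation ψ'' + (u_0(t) − z²/4) ψ = 0 on I. -/

import Mathlib

open Finset

-- double-sum antisymmetry
lemma swap_sum {N : ℕ} (f : Fin N → Fin N → ℝ)
    (hf : ∀ k m, k ≠ m → f k m + f m k = 0) :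
    ∑ k, ∑ m ∈ Finset.univ.erase k, f k m = 0 := by
  have key : ∀ g : Fin N → Fin N → ℝ,
      ∑ k, ∑ m ∈ Finset.univ.erase k, g k m
        = ∑ k : Fin N, ∑ m : Fin N, if m ≠ k then g k m else 0 := by
    intro g
    refine Finset.sum_congr rfl fun k _ => ?_
    rw [← Finset.sum_filter, Finset.filter_ne']
  have hswap : ∑ k, ∑ m ∈ Finset.univ.erase k, f k m
      = ∑ k, ∑ m ∈ Finset.univ.erase k, f m k := by
    rw [key, key fun k m => f m k, Finset.sum_comm]
    refine Finset.sum_congr rfl fun k _ => Finset.sum_congr rfl fun m _ => ?_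
    by_cases h : k = m <;> simp [h, Ne.symm]
  have h2 : (∑ k, ∑ m ∈ Finset.univ.erase k, f k m)
      + (∑ k, ∑ m ∈ Finset.univ.erase k, f m k) = 0 := by
    rw [← Finset.sum_add_distrib]
    refine Finset.sum_eq_zero fun k _ => ?_
    rw [← Finset.sum_add_distrib]
    refine Finset.sum_eq_zero fun m hm => hf k m (Finset.ne_of_mem_erase hm).symm
  linarith [hswap, h2]

lemma key_alg {N : ℕ} (A B C : Fin N → ℝ) (z : ℝ)
    (hA : ∀ k m : Fin N, k ≠ m → A k ≠ A m)
    (hC : ∀ k, C k = A k * B k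
        + 2 * ∑ m ∈ Finset.univ.erase k, B k * B m / (A k - A m)) :
    (∑ k, ((∑ m ∈ Finset.univ.erase k,
            (∏ j ∈ (Finset.univ.erase k).erase m, (z - A j)) * (-B m)) * (-B k)
          + (∏ m ∈ Finset.univ.erase k, (z - A m)) * (-C k)))
      - z * (∑ k, (∏ m ∈ Finset.univ.erase k, (z - A m)) * (-B k))
      + (-∑ k, B k) * ∏ k, (z - A k) = 0 := by
  set f : Fin N → Fin N → ℝ := fun k m =>
    (∏ j ∈ (Finset.univ.erase k).erase m, (z - A j)) * (B k * B m)
      - 2 * (B k * B m / (A k - A m))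
          * ((z - A m) * ∏ j ∈ (Finset.univ.erase k).erase m, (z - A j)) with hf
  have main : (∑ k, ((∑ m ∈ Finset.univ.erase k,
            (∏ j ∈ (Finset.univ.erase k).erase m, (z - A j)) * (-B m)) * (-B k)
          + (∏ m ∈ Finset.univ.erase k, (z - A m)) * (-C k)))
      - z * (∑ k, (∏ m ∈ Finset.univ.erase k, (z - A m)) * (-B k))
      + (-∑ k, B k) * ∏ k, (z - A k)
      = ∑ k, ∑ m ∈ Finset.univ.erase k, f k m := by
    have hneg : (-∑ k, B k) = ∑ k, (-B k) := by simp
    rw [Finset.mul_sum, hneg, Finset.sum_mul, ← Finset.sum_sub_distrib,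
      ← Finset.sum_add_distrib]
    refine Finset.sum_congr rfl fun k _ => ?_
    rw [hC k]
    have hprod : ∏ j, (z - A j)
        = (z - A k) * ∏ m ∈ Finset.univ.erase k, (z - A m) :=
      (Finset.mul_prod_erase _ _ (Finset.mem_univ k)).symm
    have hQ : ∀ m ∈ Finset.univ.erase k,
        (∏ j ∈ Finset.univ.erase k, (z - A j))
          = (z - A m) * ∏ j ∈ (Finset.univ.erase k).erase m, (z - A j) :=
      fun m hm => (Finset.mul_prod_erase _ _ hm).symm
    rw [hprod]
    have e1 : ∑ m ∈ Finset.univ.erase k,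
          (∏ j ∈ (Finset.univ.erase k).erase m, (z - A j)) * -B m * -B k
        = ∑ m ∈ Finset.univ.erase k,
          (∏ j ∈ (Finset.univ.erase k).erase m, (z - A j)) * (B k * B m) :=
      Finset.sum_congr rfl fun m _ => by ring
    have e2 : ∑ m ∈ Finset.univ.erase k, f k m
        = (∑ m ∈ Finset.univ.erase k,
            (∏ j ∈ (Finset.univ.erase k).erase m, (z - A j)) * (B k * B m))
          - ∑ m ∈ Finset.univ.erase k,
              (∏ j ∈ Finset.univ.erase k, (z - A j)) * (2 * (B k * B m / (A k - A m))) := by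
      rw [← Finset.sum_sub_distrib]
      refine Finset.sum_congr rfl fun m hm => ?_
      rw [hf]
      simp only
      rw [hQ m hm]
      ring
    rw [e2, ← Finset.mul_sum]
    rw [show (∑ m ∈ Finset.univ.erase k,
          (∏ j ∈ (Finset.univ.erase k).erase m, (z - A j)) * -B m) * -B k
        = ∑ m ∈ Finset.univ.erase k,
          (∏ j ∈ (Finset.univ.erase k).erase m, (z - A j)) * -B m * -B k
      from Finset.sum_mul _ _ _, e1]
    have e3 : ∑ x ∈ Finset.univ.erase k,
          (∏ j ∈ (Finset.univ.erase k).erase x, (z - A j)) * B k * B x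
        = ∑ m ∈ Finset.univ.erase k,
          (∏ j ∈ (Finset.univ.erase k).erase m, (z - A j)) * (B k * B m) :=
      Finset.sum_congr rfl fun m _ => by ring
    have e4 : ∑ x ∈ Finset.univ.erase k, 2 * (B k * B x / (A k - A x))
        = 2 * ∑ x ∈ Finset.univ.erase k, B k * B x / (A k - A x) :=
      (Finset.mul_sum _ _ _).symm
    rw [e4]
    ring
  rw [main]
  refine swap_sum f fun k m hkm => ?_
  have hQsym : (Finset.univ.erase k).erase m = (Finset.univ.erase m).erase k :=
    Finset.erase_right_comm
  have hne : A k - A m ≠ 0 := sub_ne_zero.mpr (hA k m hkm)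
  have hne' : A m - A k ≠ 0 := sub_ne_zero.mpr (hA m k hkm.symm)
  rw [hf]
  simp only [hQsym]
  field_simp
  ring

open Finset in
/-- If the poles `aₖ` satisfy the system
`aₖ'' = aₖ aₖ' + 2 ∑_{m≠k} aₖ'aₘ'/(aₖ - aₘ)` and `u₀ = -∑ₖ aₖ'`, then for every
real `z` the function `ψ(t) = e^{-zt/2} ∏ₖ (z - aₖ(t))` satisfies the
Schrödinger equation `ψ'' + (u₀ - z²/4) ψ = 0` on `I`. -/
theorem pole_system_gives_schrodinger
    (I : Set ℝ) (hIopen : IsOpen I) (hIconn : I.OrdConnected)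
    (N : ℕ) (a : Fin N → ℝ → ℝ)
    (had : ∀ k, ∀ t ∈ I, DifferentiableAt ℝ (a k) t)
    (had2 : ∀ k, ∀ t ∈ I, DifferentiableAt ℝ (deriv (a k)) t)
    (hdist : ∀ t ∈ I, ∀ k m : Fin N, k ≠ m → a k t ≠ a m t)
    (hsys : ∀ k, ∀ t ∈ I,
      deriv (deriv (a k)) t
        = a k t * deriv (a k) t
            + 2 * ∑ m ∈ Finset.univ.erase k,
                deriv (a k) t * deriv (a m) t / (a k t - a m t)) :
    ∀ z : ℝ, ∀ t ∈ I,
      deriv (deriv (fun s => Real.exp (-(z * s) / 2) * ∏ k, (z - a k s))) t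
        + ((-∑ k, deriv (a k) t) - z ^ 2 / 4)
            * (Real.exp (-(z * t) / 2) * ∏ k, (z - a k t)) = 0 := by
  intro z t ht
  -- derivative of the exponential factor
  have hE : ∀ s : ℝ, HasDerivAt (fun u => Real.exp (-(z * u) / 2))
      (Real.exp (-(z * s) / 2) * (-z / 2)) s := by
    intro s
    have h1 : HasDerivAt (fun u : ℝ => -(z * u) / 2) (-z / 2) s := by
      simpa [neg_div] using (((hasDerivAt_id s).const_mul z).neg.div_const 2)
    simpa using h1.exp
  -- derivative of each factor
  have hfac : ∀ (k : Fin N), ∀ s ∈ I,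
      HasDerivAt (fun u => z - a k u) (-(deriv (a k) s)) s :=
    fun k s hs => HasDerivAt.const_sub z (had k s hs).hasDerivAt
  -- derivative of the product
  have hP : ∀ s ∈ I, HasDerivAt (fun u => ∏ k, (z - a k u))
      (∑ k, (∏ m ∈ Finset.univ.erase k, (z - a m s)) * (-(deriv (a k) s))) s := by
    intro s hs
    have := HasDerivAt.fun_finsetProd (u := Finset.univ) (f := fun k u => z - a k u)
      (f' := fun k => -(deriv (a k) s)) (x := s) (fun k _ => hfac k s hs)
    simpa [smul_eq_mul] using this
  -- first derivative of ψ
  set ψ1 : ℝ → ℝ := fun s =>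
    Real.exp (-(z * s) / 2) * (-z / 2) * ∏ k, (z - a k s)
      + Real.exp (-(z * s) / 2)
        * ∑ k, (∏ m ∈ Finset.univ.erase k, (z - a m s)) * (-(deriv (a k) s)) with hψ1
  have hψ : ∀ s ∈ I,
      HasDerivAt (fun u => Real.exp (-(z * u) / 2) * ∏ k, (z - a k u)) (ψ1 s) s :=
    fun s hs => (hE s).mul (hP s hs)
  have hderiv1 : Set.EqOn
      (deriv (fun s => Real.exp (-(z * s) / 2) * ∏ k, (z - a k s))) ψ1 I :=
    fun s hs => (hψ s hs).deriv
  have hev : deriv (fun s => Real.exp (-(z * s) / 2) * ∏ k, (z - a k s))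
      =ᶠ[nhds t] ψ1 := Filter.eventuallyEq_of_mem (hIopen.mem_nhds ht) hderiv1
  rw [hev.deriv_eq]
  -- derivative of the inner sum D1
  have hD1 : HasDerivAt
      (fun u => ∑ k, (∏ m ∈ Finset.univ.erase k, (z - a m u)) * (-(deriv (a k) u)))
      (∑ k, ((∑ m ∈ Finset.univ.erase k,
            (∏ j ∈ (Finset.univ.erase k).erase m, (z - a j t)) * (-(deriv (a m) t)))
            * (-(deriv (a k) t))
          + (∏ m ∈ Finset.univ.erase k, (z - a m t)) * (-(deriv (deriv (a k)) t)))) t := by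
    refine HasDerivAt.fun_sum fun k _ => ?_
    have hQ : HasDerivAt (fun u => ∏ m ∈ Finset.univ.erase k, (z - a m u))
        (∑ m ∈ Finset.univ.erase k,
          (∏ j ∈ (Finset.univ.erase k).erase m, (z - a j t)) * (-(deriv (a m) t))) t := by
      have := HasDerivAt.fun_finsetProd (u := Finset.univ.erase k)
        (f := fun m u => z - a m u) (f' := fun m => -(deriv (a m) t)) (x := t)
        (fun m _ => hfac m t ht)
      simpa [smul_eq_mul] using this
    exact hQ.mul (had2 k t ht).hasDerivAt.neg
  -- derivative of ψ1 at t
  have hψ1d : HasDerivAt ψ1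
      ((Real.exp (-(z * t) / 2) * (-z / 2) * (-z / 2)) * ∏ k, (z - a k t)
        + (Real.exp (-(z * t) / 2) * (-z / 2))
            * ∑ k, (∏ m ∈ Finset.univ.erase k, (z - a m t)) * (-(deriv (a k) t))
        + ((Real.exp (-(z * t) / 2) * (-z / 2))
            * ∑ k, (∏ m ∈ Finset.univ.erase k, (z - a m t)) * (-(deriv (a k) t))
          + Real.exp (-(z * t) / 2)
            * ∑ k, ((∑ m ∈ Finset.univ.erase k,
                (∏ j ∈ (Finset.univ.erase k).erase m, (z - a j t)) * (-(deriv (a m) t)))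
                * (-(deriv (a k) t))
              + (∏ m ∈ Finset.univ.erase k, (z - a m t))
                  * (-(deriv (deriv (a k)) t))))) t := by
    rw [hψ1]
    exact (((hE t).mul_const (-z / 2)).mul (hP t ht)).add ((hE t).mul hD1)
  rw [hψ1d.deriv]
  have hkey := key_alg (fun k => a k t) (fun k => deriv (a k) t)
    (fun k => deriv (deriv (a k)) t) z (fun k m h => hdist t ht k m h)
    (fun k => hsys k t ht)
  simp only at hkey
  linear_combination Real.exp (-(z * t) / 2) * hkey
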